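/- Sum-rate converse inequality for the MA/DBC: for any (n, M13, M23, M31, M32) code for the additive-noise MA/DBC in which the noise vector Z3^n is independent of (W13, W23, W31, W32, Z1^n, Z2^n), one has H(W13, W23 | W31, W32) − H(W13, W23 | Y3^n, W31, W32) ≤ n log q − H(Z3^n). -/

import Mathlib

open MeasureTheory ProbabilityTheory Real Filter Topology
open scoped ENNReal

noncomputable section

/-- Shannon entropy (in the same base as `Real.log`) of a finitely-valued random variable. -/
def Hent {Ω S : Type*} [MeasurableSpace Ω] [Fintype S] (μ : Measure Ω) (X : Ω → S) : ℝ :=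
  ∑ s : S, Real.negMulLog ((μ (X ⁻¹' {s})).toReal)

/-- Mutual information I(X ; Y) = H(X) + H(Y) − H(X, Y). -/
def MI {Ω S T : Type*} [MeasurableSpace Ω] [Fintype S] [Fintype T]
    (μ : Measure Ω) (X : Ω → S) (Y : Ω → T) : ℝ :=
  Hent μ X + Hent μ Y - Hent μ (fun ω => (X ω, Y ω))

/-- Conditional mutual information
I(X ; Y | Z) = H(X, Z) + H(Y, Z) − H(X, Y, Z) − H(Z). -/
def CMI {Ω S T U : Type*} [MeasurableSpace Ω] [Fintype S] [Fintype T] [Fintype U]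
    (μ : Measure Ω) (X : Ω → S) (Y : Ω → T) (Z : Ω → U) : ℝ :=
  Hent μ (fun ω => (X ω, Z ω)) + Hent μ (fun ω => (Y ω, Z ω))
    - Hent μ (fun ω => (X ω, Y ω, Z ω)) - Hent μ Z

/-- Conditional Shannon entropy H(X | Y) = H(X, Y) − H(Y). -/
def Hcond {Ω S T : Type*} [MeasurableSpace Ω] [Fintype S] [Fintype T]
    (μ : Measure Ω) (X : Ω → S) (Y : Ω → T) : ℝ :=
  Hent μ (fun ω => (X ω, Y ω)) - Hent μ Y

/-- Elementary conditional independence of finitely-valued random variables X and Y given Z: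
for all values a, b, c,  P(X=a, Y=b, Z=c) · P(Z=c) = P(X=a, Z=c) · P(Y=b, Z=c). -/
def CondIndepElem {Ω S T U : Type*} [MeasurableSpace Ω] (μ : Measure Ω)
    (X : Ω → S) (Y : Ω → T) (Z : Ω → U) : Prop :=
  ∀ (a : S) (b : T) (c : U),
    μ (X ⁻¹' {a} ∩ Y ⁻¹' {b} ∩ Z ⁻¹' {c}) * μ (Z ⁻¹' {c}) =
      μ (X ⁻¹' {a} ∩ Z ⁻¹' {c}) * μ (Y ⁻¹' {b} ∩ Z ⁻¹' {c})

/-- An (n, M13, M23, M31, M32) code for the multiple access / degraded broadcast channel. -/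
structure MACode (q n M13 M23 M31 M32 : ℕ) where
  f1 : Fin M13 → (i : Fin n) → (Fin i.1 → ZMod q) → ZMod q
  f2 : Fin M23 → (i : Fin n) → (Fin i.1 → ZMod q) → ZMod q
  f3 : Fin M31 → Fin M32 → (i : Fin n) → (Fin i.1 → ZMod q) → ZMod q
  g1 : Fin M13 → (Fin n → ZMod q) → Fin M31
  g2 : Fin M23 → (Fin n → ZMod q) → Fin M32
  g3 : Fin M31 → Fin M32 → (Fin n → ZMod q) → Fin M13 × Fin M23

/-- The triple of channel inputs (X_{1,i}, X_{2,i}, X_{3,i}) produced by the adaptive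
encoders, where the past outputs are Y_{1,j} = X_{1,j} + X_{3,j} + Z_{1,j},
Y_{2,j} = X_{2,j} + X_{3,j} + Z_{1,j} + Z_{2,j} and
Y_{3,j} = X_{1,j} + X_{2,j} + X_{3,j} + Z_{3,j} (addition mod q). -/
def MAX {q n M13 M23 M31 M32 : ℕ} (C : MACode q n M13 M23 M31 M32)
    (w13 : Fin M13) (w23 : Fin M23) (w31 : Fin M31) (w32 : Fin M32)
    (z1 z2 z3 : Fin n → ZMod q) : (i : Fin n) → ZMod q × ZMod q × ZMod q
  | i =>
    (C.f1 w13 i (fun j =>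
        have h : j.1 < n := j.2.trans i.2
        (MAX C w13 w23 w31 w32 z1 z2 z3 ⟨j.1, h⟩).1 +
          (MAX C w13 w23 w31 w32 z1 z2 z3 ⟨j.1, h⟩).2.2 + z1 ⟨j.1, h⟩),
     C.f2 w23 i (fun j =>
        have h : j.1 < n := j.2.trans i.2
        (MAX C w13 w23 w31 w32 z1 z2 z3 ⟨j.1, h⟩).2.1 +
          (MAX C w13 w23 w31 w32 z1 z2 z3 ⟨j.1, h⟩).2.2 + z1 ⟨j.1, h⟩ + z2 ⟨j.1, h⟩),
     C.f3 w31 w32 i (fun j =>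
        have h : j.1 < n := j.2.trans i.2
        (MAX C w13 w23 w31 w32 z1 z2 z3 ⟨j.1, h⟩).1 +
          (MAX C w13 w23 w31 w32 z1 z2 z3 ⟨j.1, h⟩).2.1 +
          (MAX C w13 w23 w31 w32 z1 z2 z3 ⟨j.1, h⟩).2.2 + z3 ⟨j.1, h⟩))
  termination_by i => i.1
  decreasing_by all_goals exact j.2

/-- Output sequence Y_1^n at user 1. -/
def MAY1 {q n M13 M23 M31 M32 : ℕ} (C : MACode q n M13 M23 M31 M32)
    (w13 : Fin M13) (w23 : Fin M23) (w31 : Fin M31) (w32 : Fin M32)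
    (z1 z2 z3 : Fin n → ZMod q) (i : Fin n) : ZMod q :=
  (MAX C w13 w23 w31 w32 z1 z2 z3 i).1 + (MAX C w13 w23 w31 w32 z1 z2 z3 i).2.2 + z1 i

/-- Output sequence Y_2^n at user 2. -/
def MAY2 {q n M13 M23 M31 M32 : ℕ} (C : MACode q n M13 M23 M31 M32)
    (w13 : Fin M13) (w23 : Fin M23) (w31 : Fin M31) (w32 : Fin M32)
    (z1 z2 z3 : Fin n → ZMod q) (i : Fin n) : ZMod q :=
  (MAX C w13 w23 w31 w32 z1 z2 z3 i).2.1 + (MAX C w13 w23 w31 w32 z1 z2 z3 i).2.2 +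
    z1 i + z2 i

/-- Output sequence Y_3^n at user 3. -/
def MAY3 {q n M13 M23 M31 M32 : ℕ} (C : MACode q n M13 M23 M31 M32)
    (w13 : Fin M13) (w23 : Fin M23) (w31 : Fin M31) (w32 : Fin M32)
    (z1 z2 z3 : Fin n → ZMod q) (i : Fin n) : ZMod q :=
  (MAX C w13 w23 w31 w32 z1 z2 z3 i).1 + (MAX C w13 w23 w31 w32 z1 z2 z3 i).2.1 +
    (MAX C w13 w23 w31 w32 z1 z2 z3 i).2.2 + z3 i


/-! ### Auxiliary lemmas -/

section AuxLemmas

variable {Ω : Type*} [MeasurableSpace Ω] {μ : Measure Ω}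

/-- All fibers of `X` are measurable. -/
def FMble {α : Type*} (X : Ω → α) : Prop := ∀ s : α, MeasurableSet (X ⁻¹' {s})

lemma FMble.of_meas {S : Type*} [MeasurableSpace S] [MeasurableSingletonClass S]
    {X : Ω → S} (hX : Measurable X) : FMble X :=
  fun s => hX (measurableSet_singleton s)

lemma FMble.pair {S T : Type*} {X : Ω → S} {Y : Ω → T} (hX : FMble X) (hY : FMble Y) :
    FMble (fun ω => (X ω, Y ω)) := by
  intro p
  have h : (fun ω => (X ω, Y ω)) ⁻¹' {p} = X ⁻¹' {p.1} ∩ Y ⁻¹' {p.2} := by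
    ext ω; simp [Prod.ext_iff]
  rw [h]; exact (hX _).inter (hY _)

lemma FMble.comp {S T : Type*} [Fintype S] {X : Ω → S} (hX : FMble X) (g : S → T) :
    FMble (fun ω => g (X ω)) := by
  intro t
  have h : (fun ω => g (X ω)) ⁻¹' {t} = ⋃ s : S, ⋃ (_ : g s = t), X ⁻¹' {s} := by
    ext ω
    simp only [Set.mem_preimage, Set.mem_singleton_iff, Set.mem_iUnion]
    exact ⟨fun h => ⟨X ω, h, rfl⟩, fun ⟨s, h1, h2⟩ => by rw [h2]; exact h1⟩
  rw [h]
  exact MeasurableSet.iUnion fun s => MeasurableSet.iUnion fun _ => hX s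

lemma sum_meas_inter_fiber {T : Type*} [Fintype T] {A : Set Ω} (hA : MeasurableSet A)
    {Y : Ω → T} (hY : FMble Y) : ∑ t : T, μ (A ∩ Y ⁻¹' {t}) = μ A := by
  have hd : Pairwise (Function.onFun Disjoint fun t : T => A ∩ Y ⁻¹' {t}) := by
    intro t t' htt'
    refine Set.disjoint_left.mpr ?_
    rintro ω ⟨-, h1⟩ ⟨-, h2⟩
    simp only [Set.mem_preimage, Set.mem_singleton_iff] at h1 h2
    exact htt' (h1.symm.trans h2)
  have hu : (⋃ t, A ∩ Y ⁻¹' {t}) = A := by ext ω; simp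
  conv_rhs => rw [← hu]
  rw [measure_iUnion hd (fun t => hA.inter (hY t)), tsum_fintype]

lemma sum_toReal_meas_inter [IsFiniteMeasure μ] {T : Type*} [Fintype T] {A : Set Ω}
    (hA : MeasurableSet A) {Y : Ω → T} (hY : FMble Y) :
    ∑ t : T, (μ (A ∩ Y ⁻¹' {t})).toReal = (μ A).toReal := by
  rw [← ENNReal.toReal_sum (fun t _ => measure_ne_top μ _), sum_meas_inter_fiber hA hY]

lemma sum_p_eq_one [IsProbabilityMeasure μ] {S : Type*} [Fintype S] {X : Ω → S}
    (hX : FMble X) : ∑ s : S, (μ (X ⁻¹' {s})).toReal = 1 := by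
  have h := sum_toReal_meas_inter (μ := μ) MeasurableSet.univ hX
  simpa using h

lemma key_ineq {x r : ℝ} (hx : 0 ≤ x) (hr : 0 < r) :
    x - r ≤ x * Real.log x - x * Real.log r := by
  rcases eq_or_lt_of_le hx with h | h
  · rw [← h]; simp; linarith
  · have h1 := Real.log_le_sub_one_of_pos (div_pos hr h)
    rw [Real.log_div hr.ne' h.ne'] at h1
    have h2 : x * (Real.log r - Real.log x) ≤ x * (r / x - 1) :=
      mul_le_mul_of_nonneg_left h1 hx
    have h3 : x * (r / x - 1) = r - x := by field_simp
    nlinarith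

lemma Hent_comp_inj {S T : Type*} [Fintype S] [Fintype T] {X : Ω → S} {g : S → T}
    (hg : Function.Injective g) : Hent μ (fun ω => g (X ω)) = Hent μ X := by
  classical
  unfold Hent
  rw [← Finset.sum_subset (Finset.subset_univ (Finset.univ.image g))
    (fun t _ ht => ?_)]
  · rw [Finset.sum_image (fun a _ b _ h => hg h)]
    refine Finset.sum_congr rfl fun s _ => ?_
    have h : (fun ω => g (X ω)) ⁻¹' {g s} = X ⁻¹' {s} := by
      ext ω; simp [hg.eq_iff]
    rw [h]
  · have h : (fun ω => g (X ω)) ⁻¹' {t} = ∅ := by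
      ext ω
      simp only [Set.mem_preimage, Set.mem_singleton_iff, Set.mem_empty_iff_false, iff_false]
      intro hgt
      exact ht (Finset.mem_image.mpr ⟨X ω, Finset.mem_univ _, hgt⟩)
    rw [h]; simp

lemma Hent_le_log_card {S : Type*} [Fintype S] [IsProbabilityMeasure μ] {X : Ω → S}
    (hX : FMble X) : Hent μ X ≤ Real.log (Fintype.card S) := by
  classical
  set p : S → ℝ := fun s => (μ (X ⁻¹' {s})).toReal with hp
  have hsum : ∑ s : S, p s = 1 := sum_p_eq_one hX
  have hNpos : 0 < (Fintype.card S : ℝ) := by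
    rcases isEmpty_or_nonempty S with h | h
    · simp [Finset.univ_eq_empty] at hsum
    · exact_mod_cast Fintype.card_pos
  have hkey : ∀ s : S, p s - (Fintype.card S : ℝ)⁻¹ ≤
      p s * Real.log (p s) - p s * Real.log (Fintype.card S : ℝ)⁻¹ :=
    fun s => key_ineq ENNReal.toReal_nonneg (inv_pos.mpr hNpos)
  have hsumle := Finset.sum_le_sum (fun s (_ : s ∈ Finset.univ) => hkey s)
  rw [Finset.sum_sub_distrib, Finset.sum_sub_distrib, Finset.sum_const,
    ← Finset.sum_mul, hsum, Finset.card_univ] at hsumle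
  have hlog : Real.log (Fintype.card S : ℝ)⁻¹ = -Real.log (Fintype.card S) := Real.log_inv _
  have hcard : (Fintype.card S : ℝ) * (Fintype.card S : ℝ)⁻¹ = 1 := by field_simp
  have hH : Hent μ X = -∑ s : S, p s * Real.log (p s) := by
    unfold Hent
    rw [← Finset.sum_neg_distrib]
    exact Finset.sum_congr rfl fun s _ => by simp [Real.negMulLog, p]
  rw [hH]
  rw [nsmul_eq_mul] at hsumle
  rw [hlog] at hsumle
  linarith [hsumle, hcard.symm ▸ (le_refl (1 : ℝ))]

lemma Hent_pair_of_indep {S T : Type*} [Fintype S] [Fintype T]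
    [MeasurableSpace S] [MeasurableSingletonClass S]
    [MeasurableSpace T] [MeasurableSingletonClass T]
    [IsProbabilityMeasure μ] {X : Ω → S} {Y : Ω → T} (hX : Measurable X) (hY : Measurable Y)
    (h : IndepFun X Y μ) :
    Hent μ (fun ω => (X ω, Y ω)) = Hent μ X + Hent μ Y := by
  classical
  unfold Hent
  rw [Fintype.sum_prod_type]
  have hfac : ∀ (s : S) (t : T), ((μ ((fun ω => (X ω, Y ω)) ⁻¹' {(s, t)})).toReal)
      = (μ (X ⁻¹' {s})).toReal * (μ (Y ⁻¹' {t})).toReal := by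
    intro s t
    have hset : (fun ω => (X ω, Y ω)) ⁻¹' {(s, t)} = X ⁻¹' {s} ∩ Y ⁻¹' {t} := by
      ext ω; simp [Prod.ext_iff]
    rw [hset, h.measure_inter_preimage_eq_mul _ _ (measurableSet_singleton s)
      (measurableSet_singleton t), ENNReal.toReal_mul]
  simp_rw [hfac, Real.negMulLog_mul]
  rw [Finset.sum_congr rfl (fun s (_ : s ∈ Finset.univ) => Finset.sum_add_distrib
    (f := fun t => (μ (Y ⁻¹' {t})).toReal * Real.negMulLog ((μ (X ⁻¹' {s})).toReal))
    (g := fun t => (μ (X ⁻¹' {s})).toReal * Real.negMulLog ((μ (Y ⁻¹' {t})).toReal))),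
    Finset.sum_add_distrib]
  have h1 : ∀ s : S, ∑ t : T, (μ (Y ⁻¹' {t})).toReal
      * Real.negMulLog ((μ (X ⁻¹' {s})).toReal)
      = Real.negMulLog ((μ (X ⁻¹' {s})).toReal) := by
    intro s
    rw [← Finset.sum_mul, sum_p_eq_one (fun t => hY (measurableSet_singleton t)), one_mul]
  have h2 : ∀ s : S, ∑ t : T, (μ (X ⁻¹' {s})).toReal
      * Real.negMulLog ((μ (Y ⁻¹' {t})).toReal)
      = (μ (X ⁻¹' {s})).toReal * Hent μ Y := by
    intro s; rw [← Finset.mul_sum]; rfl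
  rw [Finset.sum_congr rfl (fun s _ => h1 s), Finset.sum_congr rfl (fun s _ => h2 s),
    ← Finset.sum_mul, sum_p_eq_one (fun s => hX (measurableSet_singleton s)), one_mul]
  rfl

lemma CMI_nonneg {S T U : Type*} [Fintype S] [Fintype T] [Fintype U]
    [IsProbabilityMeasure μ] {X : Ω → S} {Y : Ω → T} {Z : Ω → U}
    (hX : FMble X) (hY : FMble Y) (hZ : FMble Z) : 0 ≤ CMI μ X Y Z := by
  classical
  set x : S → T → U → ℝ := fun a b c => (μ (X ⁻¹' {a} ∩ Y ⁻¹' {b} ∩ Z ⁻¹' {c})).toReal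
    with hxdef
  set xz : S → U → ℝ := fun a c => (μ (X ⁻¹' {a} ∩ Z ⁻¹' {c})).toReal with hxzdef
  set yz : T → U → ℝ := fun b c => (μ (Y ⁻¹' {b} ∩ Z ⁻¹' {c})).toReal with hyzdef
  set z : U → ℝ := fun c => (μ (Z ⁻¹' {c})).toReal with hzdef
  have hx0 : ∀ a b c, 0 ≤ x a b c := fun _ _ _ => ENNReal.toReal_nonneg
  have hxz0 : ∀ a c, 0 ≤ xz a c := fun _ _ => ENNReal.toReal_nonneg
  have hyz0 : ∀ b c, 0 ≤ yz b c := fun _ _ => ENNReal.toReal_nonneg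
  have hz0 : ∀ c, 0 ≤ z c := fun _ => ENNReal.toReal_nonneg
  have hmono : ∀ {A B : Set Ω}, A ⊆ B → (μ A).toReal ≤ (μ B).toReal :=
    fun h => ENNReal.toReal_mono (measure_ne_top μ _) (measure_mono h)
  have hxlexz : ∀ a b c, x a b c ≤ xz a c := fun a b c =>
    hmono (fun ω ⟨⟨h1, _⟩, h3⟩ => ⟨h1, h3⟩)
  have hxleyz : ∀ a b c, x a b c ≤ yz b c := fun a b c =>
    hmono (fun ω ⟨⟨_, h2⟩, h3⟩ => ⟨h2, h3⟩)
  have hxzlez : ∀ a c, xz a c ≤ z c := fun a c => hmono (fun ω ⟨_, h2⟩ => h2)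
  have hxz_marg : ∀ a c, xz a c = ∑ b, x a b c := by
    intro a c
    have hset : ∀ b : T, X ⁻¹' {a} ∩ Y ⁻¹' {b} ∩ Z ⁻¹' {c}
        = (X ⁻¹' {a} ∩ Z ⁻¹' {c}) ∩ Y ⁻¹' {b} := by
      intro b; ext ω; simp only [Set.mem_inter_iff, Set.mem_preimage]; tauto
    rw [show xz a c = (μ (X ⁻¹' {a} ∩ Z ⁻¹' {c})).toReal from rfl,
      ← sum_toReal_meas_inter ((hX a).inter (hZ c)) hY]
    exact Finset.sum_congr rfl fun b _ => by simp only [hxdef]; rw [hset b]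
  have hyz_marg : ∀ b c, yz b c = ∑ a, x a b c := by
    intro b c
    have hset : ∀ a : S, X ⁻¹' {a} ∩ Y ⁻¹' {b} ∩ Z ⁻¹' {c}
        = (Y ⁻¹' {b} ∩ Z ⁻¹' {c}) ∩ X ⁻¹' {a} := by
      intro a; ext ω; simp only [Set.mem_inter_iff, Set.mem_preimage]; tauto
    rw [show yz b c = (μ (Y ⁻¹' {b} ∩ Z ⁻¹' {c})).toReal from rfl,
      ← sum_toReal_meas_inter ((hY b).inter (hZ c)) hX]
    exact Finset.sum_congr rfl fun a _ => by simp only [hxdef]; rw [hset a]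
  have hz_margx : ∀ c, z c = ∑ a, xz a c := by
    intro c
    rw [show z c = (μ (Z ⁻¹' {c})).toReal from rfl, ← sum_toReal_meas_inter (hZ c) hX]
    exact Finset.sum_congr rfl fun a _ => by
      simp only [hxzdef]; rw [Set.inter_comm (Z ⁻¹' {c}) (X ⁻¹' {a})]
  have hz_margy : ∀ c, z c = ∑ b, yz b c := by
    intro c
    rw [show z c = (μ (Z ⁻¹' {c})).toReal from rfl, ← sum_toReal_meas_inter (hZ c) hY]
    exact Finset.sum_congr rfl fun b _ => by
      simp only [hyzdef]; rw [Set.inter_comm (Z ⁻¹' {c}) (Y ⁻¹' {b})]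
  -- entropies as nested sums
  have hH1 : Hent μ (fun ω => (X ω, Z ω)) = ∑ a, ∑ c, Real.negMulLog (xz a c) := by
    unfold Hent
    rw [Fintype.sum_prod_type]
    refine Finset.sum_congr rfl fun a _ => Finset.sum_congr rfl fun c _ => ?_
    have hset : (fun ω => (X ω, Z ω)) ⁻¹' {(a, c)} = X ⁻¹' {a} ∩ Z ⁻¹' {c} := by
      ext ω; simp [Prod.ext_iff]
    rw [hset]
  have hH2 : Hent μ (fun ω => (Y ω, Z ω)) = ∑ b, ∑ c, Real.negMulLog (yz b c) := by
    unfold Hent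
    rw [Fintype.sum_prod_type]
    refine Finset.sum_congr rfl fun b _ => Finset.sum_congr rfl fun c _ => ?_
    have hset : (fun ω => (Y ω, Z ω)) ⁻¹' {(b, c)} = Y ⁻¹' {b} ∩ Z ⁻¹' {c} := by
      ext ω; simp [Prod.ext_iff]
    rw [hset]
  have hH3 : Hent μ (fun ω => (X ω, Y ω, Z ω))
      = ∑ a, ∑ b, ∑ c, Real.negMulLog (x a b c) := by
    unfold Hent
    rw [Fintype.sum_prod_type]
    refine Finset.sum_congr rfl fun a _ => ?_
    rw [Fintype.sum_prod_type]
    refine Finset.sum_congr rfl fun b _ => Finset.sum_congr rfl fun c _ => ?_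
    have hset : (fun ω => (X ω, Y ω, Z ω)) ⁻¹' {(a, b, c)}
        = X ⁻¹' {a} ∩ Y ⁻¹' {b} ∩ Z ⁻¹' {c} := by
      ext ω
      simp only [Set.mem_preimage, Set.mem_singleton_iff, Prod.ext_iff, Set.mem_inter_iff]
      tauto
    rw [hset]
  have hH4 : Hent μ Z = ∑ c, Real.negMulLog (z c) := rfl
  -- expansions
  have exz : ∀ (a : S) (c : U), Real.negMulLog (xz a c)
      = ∑ b, -(x a b c * Real.log (xz a c)) := by
    intro a c
    rw [show Real.negMulLog (xz a c) = -(xz a c * Real.log (xz a c)) from by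
      rw [Real.negMulLog, neg_mul]]
    set L := Real.log (xz a c) with hL
    rw [hxz_marg a c, Finset.sum_mul, ← Finset.sum_neg_distrib]
  have eyz : ∀ (b : T) (c : U), Real.negMulLog (yz b c)
      = ∑ a, -(x a b c * Real.log (yz b c)) := by
    intro b c
    rw [show Real.negMulLog (yz b c) = -(yz b c * Real.log (yz b c)) from by
      rw [Real.negMulLog, neg_mul]]
    set L := Real.log (yz b c) with hL
    rw [hyz_marg b c, Finset.sum_mul, ← Finset.sum_neg_distrib]
  have ez : ∀ c : U, Real.negMulLog (z c)
      = ∑ a, ∑ b, -(x a b c * Real.log (z c)) := by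
    intro c
    rw [show Real.negMulLog (z c) = -(z c * Real.log (z c)) from by
      rw [Real.negMulLog, neg_mul]]
    set L := Real.log (z c) with hL
    rw [hz_margx c, Finset.sum_mul, ← Finset.sum_neg_distrib]
    refine Finset.sum_congr rfl fun a _ => ?_
    rw [hxz_marg a c, Finset.sum_mul, ← Finset.sum_neg_distrib]
  -- reorderings into sums over the triple product
  have c1 : ∑ a, ∑ c, Real.negMulLog (xz a c)
      = ∑ i : S × T × U, -(x i.1 i.2.1 i.2.2 * Real.log (xz i.1 i.2.2)) := by
    calc ∑ a, ∑ c, Real.negMulLog (xz a c)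
        = ∑ a, ∑ b, ∑ c, -(x a b c * Real.log (xz a c)) :=
          Finset.sum_congr rfl fun a _ =>
            calc ∑ c, Real.negMulLog (xz a c)
                = ∑ c, ∑ b, -(x a b c * Real.log (xz a c)) :=
                  Finset.sum_congr rfl fun c _ => exz a c
              _ = ∑ b, ∑ c, -(x a b c * Real.log (xz a c)) := Finset.sum_comm
      _ = ∑ a, ∑ j : T × U, -(x a j.1 j.2 * Real.log (xz a j.2)) :=
          Finset.sum_congr rfl fun a _ => (Fintype.sum_prod_type
            (fun j : T × U => -(x a j.1 j.2 * Real.log (xz a j.2)))).symm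
      _ = ∑ i : S × T × U, -(x i.1 i.2.1 i.2.2 * Real.log (xz i.1 i.2.2)) :=
          (Fintype.sum_prod_type
            (fun i : S × (T × U) => -(x i.1 i.2.1 i.2.2 * Real.log (xz i.1 i.2.2)))).symm
  have c2 : ∑ b, ∑ c, Real.negMulLog (yz b c)
      = ∑ i : S × T × U, -(x i.1 i.2.1 i.2.2 * Real.log (yz i.2.1 i.2.2)) := by
    calc ∑ b, ∑ c, Real.negMulLog (yz b c)
        = ∑ b, ∑ c, ∑ a, -(x a b c * Real.log (yz b c)) :=
          Finset.sum_congr rfl fun b _ => Finset.sum_congr rfl fun c _ => eyz b c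
      _ = ∑ b, ∑ a, ∑ c, -(x a b c * Real.log (yz b c)) :=
          Finset.sum_congr rfl fun b _ => Finset.sum_comm
      _ = ∑ a, ∑ b, ∑ c, -(x a b c * Real.log (yz b c)) := Finset.sum_comm
      _ = ∑ a, ∑ j : T × U, -(x a j.1 j.2 * Real.log (yz j.1 j.2)) :=
          Finset.sum_congr rfl fun a _ => (Fintype.sum_prod_type
            (fun j : T × U => -(x a j.1 j.2 * Real.log (yz j.1 j.2)))).symm
      _ = ∑ i : S × T × U, -(x i.1 i.2.1 i.2.2 * Real.log (yz i.2.1 i.2.2)) :=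
          (Fintype.sum_prod_type
            (fun i : S × (T × U) => -(x i.1 i.2.1 i.2.2 * Real.log (yz i.2.1 i.2.2)))).symm
  have c3 : ∑ c, Real.negMulLog (z c)
      = ∑ i : S × T × U, -(x i.1 i.2.1 i.2.2 * Real.log (z i.2.2)) := by
    calc ∑ c, Real.negMulLog (z c)
        = ∑ c, ∑ a, ∑ b, -(x a b c * Real.log (z c)) :=
          Finset.sum_congr rfl fun c _ => ez c
      _ = ∑ a, ∑ c, ∑ b, -(x a b c * Real.log (z c)) := Finset.sum_comm
      _ = ∑ a, ∑ b, ∑ c, -(x a b c * Real.log (z c)) :=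
          Finset.sum_congr rfl fun a _ => Finset.sum_comm
      _ = ∑ a, ∑ j : T × U, -(x a j.1 j.2 * Real.log (z j.2)) :=
          Finset.sum_congr rfl fun a _ => (Fintype.sum_prod_type
            (fun j : T × U => -(x a j.1 j.2 * Real.log (z j.2)))).symm
      _ = ∑ i : S × T × U, -(x i.1 i.2.1 i.2.2 * Real.log (z i.2.2)) :=
          (Fintype.sum_prod_type
            (fun i : S × (T × U) => -(x i.1 i.2.1 i.2.2 * Real.log (z i.2.2)))).symm
  have c4 : ∑ a, ∑ b, ∑ c, Real.negMulLog (x a b c)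
      = ∑ i : S × T × U, Real.negMulLog (x i.1 i.2.1 i.2.2) := by
    calc ∑ a, ∑ b, ∑ c, Real.negMulLog (x a b c)
        = ∑ a, ∑ j : T × U, Real.negMulLog (x a j.1 j.2) :=
          Finset.sum_congr rfl fun a _ => (Fintype.sum_prod_type
            (fun j : T × U => Real.negMulLog (x a j.1 j.2))).symm
      _ = ∑ i : S × T × U, Real.negMulLog (x i.1 i.2.1 i.2.2) :=
          (Fintype.sum_prod_type
            (fun i : S × (T × U) => Real.negMulLog (x i.1 i.2.1 i.2.2))).symm
  -- CMI as a single sum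
  have hCMI : CMI μ X Y Z = ∑ i : S × T × U,
      (x i.1 i.2.1 i.2.2 * Real.log (x i.1 i.2.1 i.2.2)
        + x i.1 i.2.1 i.2.2 * Real.log (z i.2.2)
        - x i.1 i.2.1 i.2.2 * Real.log (xz i.1 i.2.2)
        - x i.1 i.2.1 i.2.2 * Real.log (yz i.2.1 i.2.2)) := by
    unfold CMI
    rw [hH1, hH2, hH3, hH4, c1, c2, c3, c4, ← Finset.sum_add_distrib,
      ← Finset.sum_sub_distrib, ← Finset.sum_sub_distrib]
    refine Finset.sum_congr rfl fun i _ => ?_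
    rw [Real.negMulLog]
    ring
  -- termwise bound
  have hterm : ∀ (a : S) (b : T) (c : U),
      x a b c - xz a c * yz b c / z c ≤
        x a b c * Real.log (x a b c) + x a b c * Real.log (z c)
          - x a b c * Real.log (xz a c) - x a b c * Real.log (yz b c) := by
    intro a b c
    rcases eq_or_lt_of_le (hx0 a b c) with h | h
    · rw [← h]
      have hr0 : 0 ≤ xz a c * yz b c / z c :=
        div_nonneg (mul_nonneg (hxz0 a c) (hyz0 b c)) (hz0 c)
      simp only [zero_mul, zero_sub, add_zero, sub_zero, zero_add, neg_zero]
      linarith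
    · have hxzpos : 0 < xz a c := lt_of_lt_of_le h (hxlexz a b c)
      have hyzpos : 0 < yz b c := lt_of_lt_of_le h (hxleyz a b c)
      have hzpos : 0 < z c := lt_of_lt_of_le hxzpos (hxzlez a c)
      have hrpos : 0 < xz a c * yz b c / z c := div_pos (mul_pos hxzpos hyzpos) hzpos
      have hk := key_ineq (hx0 a b c) hrpos
      have hlogr : Real.log (xz a c * yz b c / z c)
          = Real.log (xz a c) + Real.log (yz b c) - Real.log (z c) := by
        rw [Real.log_div (mul_pos hxzpos hyzpos).ne' hzpos.ne',
          Real.log_mul hxzpos.ne' hyzpos.ne']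
      rw [hlogr] at hk
      nlinarith [hk]
  -- total mass facts
  have hsum1 : ∑ i : S × T × U, x i.1 i.2.1 i.2.2 = 1 := by
    rw [← sum_p_eq_one (μ := μ) (hX.pair (hY.pair hZ))]
    refine Finset.sum_congr rfl fun i _ => ?_
    have hset : (fun ω => (X ω, Y ω, Z ω)) ⁻¹' {i}
        = X ⁻¹' {i.1} ∩ Y ⁻¹' {i.2.1} ∩ Z ⁻¹' {i.2.2} := by
      ext ω
      simp only [Set.mem_preimage, Set.mem_singleton_iff, Prod.ext_iff, Set.mem_inter_iff]
      tauto
    simp only [hxdef]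
    rw [hset]
  have hrc : ∀ c : U, ∑ a, ∑ b, xz a c * yz b c / z c ≤ z c := by
    intro c
    by_cases hzc : z c = 0
    · have hxz0' : ∀ a, xz a c = 0 := fun a => le_antisymm (hzc ▸ hxzlez a c) (hxz0 a c)
      have hz' : ∀ a : S, ∑ b : T, xz a c * yz b c / z c = 0 := fun a => by
        simp [hxz0' a]
      rw [Finset.sum_eq_zero (fun a _ => hz' a)]
      exact hz0 c
    · have e : ∑ a, ∑ b, xz a c * yz b c / z c
          = (∑ a, xz a c) * (∑ b, yz b c) / z c := by
        rw [Finset.sum_mul_sum, Finset.sum_div]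
        exact Finset.sum_congr rfl fun a _ => by rw [Finset.sum_div]
      rw [e, ← hz_margx c, ← hz_margy c, mul_div_assoc, div_self hzc, mul_one]
  have hrsum : ∑ i : S × T × U, xz i.1 i.2.2 * yz i.2.1 i.2.2 / z i.2.2 ≤ 1 := by
    have e1 : ∑ i : S × T × U, xz i.1 i.2.2 * yz i.2.1 i.2.2 / z i.2.2
        = ∑ c, ∑ a, ∑ b, xz a c * yz b c / z c := by
      calc ∑ i : S × T × U, xz i.1 i.2.2 * yz i.2.1 i.2.2 / z i.2.2
          = ∑ a, ∑ j : T × U, xz a j.2 * yz j.1 j.2 / z j.2 := Fintype.sum_prod_type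
            (fun i : S × (T × U) => xz i.1 i.2.2 * yz i.2.1 i.2.2 / z i.2.2)
        _ = ∑ a, ∑ b, ∑ c, xz a c * yz b c / z c :=
            Finset.sum_congr rfl fun a _ => Fintype.sum_prod_type
              (fun j : T × U => xz a j.2 * yz j.1 j.2 / z j.2)
        _ = ∑ a, ∑ c, ∑ b, xz a c * yz b c / z c :=
            Finset.sum_congr rfl fun a _ => Finset.sum_comm
        _ = ∑ c, ∑ a, ∑ b, xz a c * yz b c / z c := Finset.sum_comm
    rw [e1]
    calc ∑ c, ∑ a, ∑ b, xz a c * yz b c / z c ≤ ∑ c, z c :=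
          Finset.sum_le_sum fun c _ => hrc c
      _ = 1 := sum_p_eq_one hZ
  rw [hCMI]
  have hlow := Finset.sum_le_sum (fun (i : S × T × U) (_ : i ∈ Finset.univ) =>
    hterm i.1 i.2.1 i.2.2)
  rw [Finset.sum_sub_distrib, hsum1] at hlow
  linarith

end AuxLemmas

/-! ### Properties of the recursive encoder maps -/

lemma MAX_congr {q n M13 M23 M31 M32 : ℕ} (C : MACode q n M13 M23 M31 M32)
    (w13 : Fin M13) (w23 : Fin M23) (w31 : Fin M31) (w32 : Fin M32)
    (z1 z2 z3 z3' : Fin n → ZMod q) (i : Fin n)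
    (h : ∀ j : Fin n, j.1 < i.1 → z3 j = z3' j) :
    MAX C w13 w23 w31 w32 z1 z2 z3 i = MAX C w13 w23 w31 w32 z1 z2 z3' i := by
  rcases i with ⟨iv, hi⟩
  induction iv using Nat.strongRecOn with
  | ind k ih =>
    rw [MAX, MAX]
    refine congrArg₂ _ ?_ (congrArg₂ _ ?_ ?_)
    · refine congrArg _ (funext fun j => ?_)
      have e := ih j.1 j.2 (j.2.trans hi) (fun j' hj' => h j' (hj'.trans j.2))
      show (MAX C w13 w23 w31 w32 z1 z2 z3 ⟨j.1, j.2.trans hi⟩).1 +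
          (MAX C w13 w23 w31 w32 z1 z2 z3 ⟨j.1, j.2.trans hi⟩).2.2 + z1 ⟨j.1, j.2.trans hi⟩ =
        (MAX C w13 w23 w31 w32 z1 z2 z3' ⟨j.1, j.2.trans hi⟩).1 +
          (MAX C w13 w23 w31 w32 z1 z2 z3' ⟨j.1, j.2.trans hi⟩).2.2 + z1 ⟨j.1, j.2.trans hi⟩
      rw [e]
    · refine congrArg _ (funext fun j => ?_)
      have e := ih j.1 j.2 (j.2.trans hi) (fun j' hj' => h j' (hj'.trans j.2))
      show (MAX C w13 w23 w31 w32 z1 z2 z3 ⟨j.1, j.2.trans hi⟩).2.1 +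
          (MAX C w13 w23 w31 w32 z1 z2 z3 ⟨j.1, j.2.trans hi⟩).2.2 + z1 ⟨j.1, j.2.trans hi⟩ +
          z2 ⟨j.1, j.2.trans hi⟩ =
        (MAX C w13 w23 w31 w32 z1 z2 z3' ⟨j.1, j.2.trans hi⟩).2.1 +
          (MAX C w13 w23 w31 w32 z1 z2 z3' ⟨j.1, j.2.trans hi⟩).2.2 + z1 ⟨j.1, j.2.trans hi⟩ +
          z2 ⟨j.1, j.2.trans hi⟩
      rw [e]
    · refine congrArg _ (funext fun j => ?_)
      have e := ih j.1 j.2 (j.2.trans hi) (fun j' hj' => h j' (hj'.trans j.2))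
      show (MAX C w13 w23 w31 w32 z1 z2 z3 ⟨j.1, j.2.trans hi⟩).1 +
          (MAX C w13 w23 w31 w32 z1 z2 z3 ⟨j.1, j.2.trans hi⟩).2.1 +
          (MAX C w13 w23 w31 w32 z1 z2 z3 ⟨j.1, j.2.trans hi⟩).2.2 + z3 ⟨j.1, j.2.trans hi⟩ =
        (MAX C w13 w23 w31 w32 z1 z2 z3' ⟨j.1, j.2.trans hi⟩).1 +
          (MAX C w13 w23 w31 w32 z1 z2 z3' ⟨j.1, j.2.trans hi⟩).2.1 +
          (MAX C w13 w23 w31 w32 z1 z2 z3' ⟨j.1, j.2.trans hi⟩).2.2 + z3' ⟨j.1, j.2.trans hi⟩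
      rw [e, h ⟨j.1, j.2.trans hi⟩ j.2]

lemma MAY3_inj {q n M13 M23 M31 M32 : ℕ} (C : MACode q n M13 M23 M31 M32)
    (w13 : Fin M13) (w23 : Fin M23) (w31 : Fin M31) (w32 : Fin M32)
    (z1 z2 : Fin n → ZMod q) :
    Function.Injective (fun z3 => MAY3 C w13 w23 w31 w32 z1 z2 z3) := by
  intro z3 z3' hz
  simp only at hz
  funext i
  rcases i with ⟨iv, hi⟩
  induction iv using Nat.strongRecOn with
  | ind k ih =>
    have hlt : ∀ j : Fin n, j.1 < k → z3 j = z3' j := by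
      intro j hj
      have h := ih j.1 hj j.2
      rcases j with ⟨jv, hj'⟩
      exact h
    have hM := MAX_congr C w13 w23 w31 w32 z1 z2 z3 z3' ⟨k, hi⟩ hlt
    have hY : MAY3 C w13 w23 w31 w32 z1 z2 z3 ⟨k, hi⟩
        = MAY3 C w13 w23 w31 w32 z1 z2 z3' ⟨k, hi⟩ := by rw [hz]
    unfold MAY3 at hY
    rw [hM] at hY
    exact add_left_cancel hY

/-- **Sum-rate converse inequality for the MA/DBC**: for any (n, M13, M23, M31, M32) code
for the additive-noise MA/DBC in which the noise vector Z3^n is independent of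
(W13, W23, W31, W32, Z1^n, Z2^n), one has
H(W13, W23 | W31, W32) − H(W13, W23 | Y3^n, W31, W32) ≤ n log q − H(Z3^n). -/
theorem madbc_sum_rate_converse {Ω : Type*} [MeasurableSpace Ω] (μ : Measure Ω)
    [IsProbabilityMeasure μ] (q : ℕ) [NeZero q] (hq : 2 ≤ q)
    (n M13 M23 M31 M32 : ℕ) (C : MACode q n M13 M23 M31 M32)
    (W13 : Ω → Fin M13) (W23 : Ω → Fin M23) (W31 : Ω → Fin M31) (W32 : Ω → Fin M32)
    (Z1 Z2 Z3 : Ω → Fin n → ZMod q)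
    (hW13 : Measurable W13) (hW23 : Measurable W23)
    (hW31 : Measurable W31) (hW32 : Measurable W32)
    (hZ1 : Measurable Z1) (hZ2 : Measurable Z2) (hZ3 : Measurable Z3)
    (hindep : IndepFun
      (fun ω => (W13 ω, W23 ω, W31 ω, W32 ω, Z1 ω, Z2 ω)) Z3 μ) :
    Hcond μ (fun ω => (W13 ω, W23 ω)) (fun ω => (W31 ω, W32 ω)) -
      Hcond μ (fun ω => (W13 ω, W23 ω))
        (fun ω => (MAY3 C (W13 ω) (W23 ω) (W31 ω) (W32 ω) (Z1 ω) (Z2 ω) (Z3 ω),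
          W31 ω, W32 ω)) ≤
      n * Real.log q - Hent μ Z3 := by
  classical
  -- fiber-measurability of everything in sight
  have fW13 : FMble W13 := FMble.of_meas hW13
  have fW23 : FMble W23 := FMble.of_meas hW23
  have fW31 : FMble W31 := FMble.of_meas hW31
  have fW32 : FMble W32 := FMble.of_meas hW32
  have fZ1 : FMble Z1 := FMble.of_meas hZ1
  have fZ2 : FMble Z2 := FMble.of_meas hZ2
  have fZ3 : FMble Z3 := FMble.of_meas hZ3
  have fW : FMble (fun ω => (W13 ω, W23 ω)) := fW13.pair fW23
  have fV : FMble (fun ω => (W31 ω, W32 ω)) := fW31.pair fW32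
  have fZ12 : FMble (fun ω => (Z1 ω, Z2 ω)) := fZ1.pair fZ2
  have fWV : FMble (fun ω => ((W13 ω, W23 ω), (W31 ω, W32 ω))) := fW.pair fV
  have fG : FMble (fun ω => (W13 ω, W23 ω, W31 ω, W32 ω, Z1 ω, Z2 ω)) :=
    fW13.pair (fW23.pair (fW31.pair (fW32.pair (fZ1.pair fZ2))))
  have fY : FMble (fun ω =>
      MAY3 C (W13 ω) (W23 ω) (W31 ω) (W32 ω) (Z1 ω) (Z2 ω) (Z3 ω)) :=
    (fG.pair fZ3).comp
      (fun p => MAY3 C p.1.1 p.1.2.1 p.1.2.2.1 p.1.2.2.2.1 p.1.2.2.2.2.1 p.1.2.2.2.2.2 p.2)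
  have fconst : FMble (fun _ : Ω => ()) := by
    intro s
    have h : (fun _ : Ω => ()) ⁻¹' {s} = Set.univ := by ext ω; simp
    rw [h]; exact MeasurableSet.univ
  -- shorthand real quantities
  -- H(c) = 0 for the constant unit map
  have hHu : Hent μ (fun _ : Ω => ()) = 0 := by
    have h : ((fun _ : Ω => ()) ⁻¹' {()}) = Set.univ := by ext ω; simp
    simp [Hent, h]
  -- subadditivity for (Y, V) from CMI with unit conditioning
  have hsub0 : 0 ≤ Hent μ (fun ω =>
        ((MAY3 C (W13 ω) (W23 ω) (W31 ω) (W32 ω) (Z1 ω) (Z2 ω) (Z3 ω)), ()))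
      + Hent μ (fun ω => ((W31 ω, W32 ω), ()))
      - Hent μ (fun ω =>
        ((MAY3 C (W13 ω) (W23 ω) (W31 ω) (W32 ω) (Z1 ω) (Z2 ω) (Z3 ω)),
          ((W31 ω, W32 ω), ())))
      - Hent μ (fun _ : Ω => ()) := CMI_nonneg fY fV fconst
  have eYu : Hent μ (fun ω =>
        ((MAY3 C (W13 ω) (W23 ω) (W31 ω) (W32 ω) (Z1 ω) (Z2 ω) (Z3 ω)), ()))
      = Hent μ (fun ω =>
        MAY3 C (W13 ω) (W23 ω) (W31 ω) (W32 ω) (Z1 ω) (Z2 ω) (Z3 ω)) :=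
    Hent_comp_inj (X := fun ω =>
        MAY3 C (W13 ω) (W23 ω) (W31 ω) (W32 ω) (Z1 ω) (Z2 ω) (Z3 ω))
      (g := fun y => (y, ())) (fun a b h => congrArg Prod.fst h)
  have eVu : Hent μ (fun ω => ((W31 ω, W32 ω), ()))
      = Hent μ (fun ω => (W31 ω, W32 ω)) :=
    Hent_comp_inj (X := fun ω => (W31 ω, W32 ω)) (g := fun y => (y, ()))
      (fun a b h => congrArg Prod.fst h)
  have eYVu : Hent μ (fun ω =>
        ((MAY3 C (W13 ω) (W23 ω) (W31 ω) (W32 ω) (Z1 ω) (Z2 ω) (Z3 ω)),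
          ((W31 ω, W32 ω), ())))
      = Hent μ (fun ω =>
        ((MAY3 C (W13 ω) (W23 ω) (W31 ω) (W32 ω) (Z1 ω) (Z2 ω) (Z3 ω)),
          (W31 ω, W32 ω))) :=
    Hent_comp_inj (X := fun ω =>
        ((MAY3 C (W13 ω) (W23 ω) (W31 ω) (W32 ω) (Z1 ω) (Z2 ω) (Z3 ω)),
          (W31 ω, W32 ω)))
      (g := fun p => (p.1, (p.2, ())))
      (by intro a b h; simp only [Prod.ext_iff] at h ⊢; exact ⟨h.1, h.2.1⟩)
  rw [eYu, eVu, eYVu, hHu] at hsub0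
  -- H(Y) ≤ n log q
  have hmax : Hent μ (fun ω =>
        MAY3 C (W13 ω) (W23 ω) (W31 ω) (W32 ω) (Z1 ω) (Z2 ω) (Z3 ω))
      ≤ (n : ℝ) * Real.log q := by
    have h := Hent_le_log_card (μ := μ) fY
    have hcard : Fintype.card (Fin n → ZMod q) = q ^ n := by
      rw [Fintype.card_fun, ZMod.card, Fintype.card_fin]
    rw [hcard] at h
    calc Hent μ (fun ω =>
          MAY3 C (W13 ω) (W23 ω) (W31 ω) (W32 ω) (Z1 ω) (Z2 ω) (Z3 ω))
        ≤ Real.log ((q : ℝ) ^ n) := by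
          convert h using 2
          push_cast
          ring
      _ = (n : ℝ) * Real.log q := by rw [Real.log_pow]
  -- CMI(Y ; (Z1,Z2) | ((W13,W23),(W31,W32))) ≥ 0
  have hCMI2 : 0 ≤ Hent μ (fun ω =>
        ((MAY3 C (W13 ω) (W23 ω) (W31 ω) (W32 ω) (Z1 ω) (Z2 ω) (Z3 ω)),
          ((W13 ω, W23 ω), (W31 ω, W32 ω))))
      + Hent μ (fun ω => ((Z1 ω, Z2 ω), ((W13 ω, W23 ω), (W31 ω, W32 ω))))
      - Hent μ (fun ω =>
        ((MAY3 C (W13 ω) (W23 ω) (W31 ω) (W32 ω) (Z1 ω) (Z2 ω) (Z3 ω)),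
          ((Z1 ω, Z2 ω), ((W13 ω, W23 ω), (W31 ω, W32 ω)))))
      - Hent μ (fun ω => ((W13 ω, W23 ω), (W31 ω, W32 ω))) :=
    CMI_nonneg fY fZ12 fWV
  -- the conditional entropy of Y given everything but Z3 equals H(Z3)
  have eGZ : Hent μ (fun ω => ((W13 ω, W23 ω, W31 ω, W32 ω, Z1 ω, Z2 ω), Z3 ω))
      = Hent μ (fun ω => (W13 ω, W23 ω, W31 ω, W32 ω, Z1 ω, Z2 ω)) + Hent μ Z3 :=
    Hent_pair_of_indep
      (hW13.prodMk (hW23.prodMk (hW31.prodMk (hW32.prodMk (hZ1.prodMk hZ2))))) hZ3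
      hindep
  have eBij : Hent μ (fun ω =>
        ((MAY3 C (W13 ω) (W23 ω) (W31 ω) (W32 ω) (Z1 ω) (Z2 ω) (Z3 ω)),
          ((Z1 ω, Z2 ω), ((W13 ω, W23 ω), (W31 ω, W32 ω)))))
      = Hent μ (fun ω => ((W13 ω, W23 ω, W31 ω, W32 ω, Z1 ω, Z2 ω), Z3 ω)) :=
    Hent_comp_inj (X := fun ω => ((W13 ω, W23 ω, W31 ω, W32 ω, Z1 ω, Z2 ω), Z3 ω))
      (g := fun p =>
        (MAY3 C p.1.1 p.1.2.1 p.1.2.2.1 p.1.2.2.2.1 p.1.2.2.2.2.1 p.1.2.2.2.2.2 p.2,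
          ((p.1.2.2.2.2.1, p.1.2.2.2.2.2), ((p.1.1, p.1.2.1), (p.1.2.2.1, p.1.2.2.2.1)))))
      (by
        rintro ⟨⟨w13, w23, w31, w32, z1, z2⟩, z3⟩ ⟨⟨w13', w23', w31', w32', z1', z2'⟩, z3'⟩ h
        simp only [Prod.mk.injEq] at h
        obtain ⟨hy, ⟨hz1, hz2⟩, ⟨h13, h23⟩, h31, h32⟩ := h
        subst hz1; subst hz2; subst h13; subst h23; subst h31; subst h32
        have hz3 : z3 = z3' := MAY3_inj C w13 w23 w31 w32 z1 z2 hy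
        subst hz3
        rfl)
  have eReord : Hent μ (fun ω => ((Z1 ω, Z2 ω), ((W13 ω, W23 ω), (W31 ω, W32 ω))))
      = Hent μ (fun ω => (W13 ω, W23 ω, W31 ω, W32 ω, Z1 ω, Z2 ω)) :=
    Hent_comp_inj (X := fun ω => (W13 ω, W23 ω, W31 ω, W32 ω, Z1 ω, Z2 ω))
      (g := fun p =>
        ((p.2.2.2.2.1, p.2.2.2.2.2), ((p.1, p.2.1), (p.2.2.1, p.2.2.2.1))))
      (by
        rintro ⟨w13, w23, w31, w32, z1, z2⟩ ⟨w13', w23', w31', w32', z1', z2'⟩ h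
        simp only [Prod.mk.injEq] at h ⊢
        tauto)
  -- reshaping the second conditional entropy in the goal
  have eSwap : Hent μ (fun ω =>
        ((W13 ω, W23 ω),
          ((MAY3 C (W13 ω) (W23 ω) (W31 ω) (W32 ω) (Z1 ω) (Z2 ω) (Z3 ω)),
            (W31 ω, W32 ω))))
      = Hent μ (fun ω =>
        ((MAY3 C (W13 ω) (W23 ω) (W31 ω) (W32 ω) (Z1 ω) (Z2 ω) (Z3 ω)),
          ((W13 ω, W23 ω), (W31 ω, W32 ω)))) :=
    Hent_comp_inj (X := fun ω =>
        ((MAY3 C (W13 ω) (W23 ω) (W31 ω) (W32 ω) (Z1 ω) (Z2 ω) (Z3 ω)),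
          ((W13 ω, W23 ω), (W31 ω, W32 ω))))
      (g := fun p => (p.2.1, (p.1, p.2.2)))
      (by
        rintro ⟨y, w, v⟩ ⟨y', w', v'⟩ h
        simp only [Prod.mk.injEq] at h ⊢
        tauto)
  -- put everything together
  show Hent μ (fun ω => ((W13 ω, W23 ω), (W31 ω, W32 ω)))
      - Hent μ (fun ω => (W31 ω, W32 ω))
      - (Hent μ (fun ω =>
          ((W13 ω, W23 ω),
            ((MAY3 C (W13 ω) (W23 ω) (W31 ω) (W32 ω) (Z1 ω) (Z2 ω) (Z3 ω)),
              (W31 ω, W32 ω))))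
        - Hent μ (fun ω =>
          ((MAY3 C (W13 ω) (W23 ω) (W31 ω) (W32 ω) (Z1 ω) (Z2 ω) (Z3 ω)),
            (W31 ω, W32 ω))))
      ≤ (n : ℝ) * Real.log q - Hent μ Z3
  rw [eSwap]
  rw [eBij, eGZ, eReord] at hCMI2
  linarith

end
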